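/- arXiv:math/0004054 — 4 statements merged into one kernel-verified Lean document; each statement's English description precedes it below -/
import Mathlib

section
/- With R₁(τ) = √(E/W + W(τ−τ₀)²), the functions z₁ = Ṙ₁ and z₂(τ) = −E/(W²R₁(τ)) + τ(τ−τ₀)/R₁(τ) are solutions of the linearized equation z̈ + 3E z / R₁⁴ = 0, and their Wronskian z₁ż₂ − z₂ż₁ equals 1 identically; in particular z₁ and z₂ are linearly independent. -/
theorem linearized_solutions (E W τ₀ : ℝ) (hE : 0 < E) (hW : 0 < W)
    (R₁ : ℝ → ℝ) (hR₁ : R₁ = fun τ => Real.sqrt (E / W + W * (τ - τ₀) ^ 2))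
    (z₁ z₂ : ℝ → ℝ) (hz₁ : z₁ = deriv R₁)
    (hz₂ : z₂ = fun τ => -E / (W ^ 2 * R₁ τ) + τ * (τ - τ₀) / R₁ τ) :
    (∀ τ : ℝ, deriv (deriv z₁) τ + 3 * E * z₁ τ / R₁ τ ^ 4 = 0) ∧
    (∀ τ : ℝ, deriv (deriv z₂) τ + 3 * E * z₂ τ / R₁ τ ^ 4 = 0) ∧
    (∀ τ : ℝ, z₁ τ * deriv z₂ τ - z₂ τ * deriv z₁ τ = 1) ∧
    (∀ c₁ c₂ : ℝ, (∀ τ : ℝ, c₁ * z₁ τ + c₂ * z₂ τ = 0) → c₁ = 0 ∧ c₂ = 0) := by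
  have hWne : W ≠ 0 := hW.ne'
  have hupos : ∀ τ : ℝ, 0 < E / W + W * (τ - τ₀) ^ 2 := fun τ => by positivity
  have hRpos : ∀ τ : ℝ, 0 < R₁ τ := by
    intro τ; rw [hR₁]; exact Real.sqrt_pos.2 (hupos τ)
  have hRne : ∀ τ : ℝ, R₁ τ ≠ 0 := fun τ => (hRpos τ).ne'
  have h2 : ∀ τ : ℝ, R₁ τ ^ 2 = E / W + W * (τ - τ₀) ^ 2 := by
    intro τ; rw [hR₁]; exact Real.sq_sqrt (hupos τ).le
  -- derivative of R₁
  have h2w : ∀ τ : ℝ, W * R₁ τ ^ 2 = E + W ^ 2 * (τ - τ₀) ^ 2 := by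
    intro τ; rw [h2 τ]; field_simp
  have hdR : ∀ τ : ℝ, HasDerivAt R₁ (W * (τ - τ₀) / R₁ τ) τ := by
    intro τ
    have hu : HasDerivAt (fun t : ℝ => E / W + W * (t - τ₀) ^ 2)
        (W * (2 * (τ - τ₀) ^ 1 * 1)) τ := by
      exact ((((hasDerivAt_id τ).sub_const τ₀).pow 2).const_mul W).const_add (E / W)
    have key := hu.sqrt (hupos τ).ne'
    have hs : Real.sqrt (E / W + W * (τ - τ₀) ^ 2) = R₁ τ := by rw [hR₁]
    rw [hs] at key
    rw [← hR₁] at key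
    convert key using 1
    have hr : R₁ τ ≠ 0 := hRne τ
    have hw : W ≠ 0 := hWne
    field_simp
  have hz₁' : ∀ τ : ℝ, z₁ τ = W * (τ - τ₀) / R₁ τ := fun τ => by
    rw [hz₁, (hdR τ).deriv]
  have hz₁fun : z₁ = fun τ => W * (τ - τ₀) / R₁ τ := funext hz₁'
  -- first derivative of z₁
  have hdz₁ : ∀ τ : ℝ, HasDerivAt z₁ (E / R₁ τ ^ 3) τ := by
    intro τ
    rw [hz₁fun]
    have hnum : HasDerivAt (fun t : ℝ => W * (t - τ₀)) (W * 1) τ :=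
      ((hasDerivAt_id τ).sub_const τ₀).const_mul W
    have key := hnum.div (hdR τ) (hRne τ)
    refine key.congr_deriv ?_
    have hr : R₁ τ ≠ 0 := hRne τ
    have hw : W ≠ 0 := hWne
    field_simp
    linear_combination h2w τ
  have hdz₁fun : deriv z₁ = fun τ => E / R₁ τ ^ 3 := funext fun τ => (hdz₁ τ).deriv
  -- second derivative of z₁
  have hddz₁ : ∀ τ : ℝ, HasDerivAt (deriv z₁) (-3 * E * (W * (τ - τ₀)) / R₁ τ ^ 5) τ := by
    intro τ
    rw [hdz₁fun]
    have key := (hasDerivAt_const τ E).div ((hdR τ).pow 3) (pow_ne_zero 3 (hRne τ))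
    refine key.congr_deriv ?_
    have hr : R₁ τ ≠ 0 := hRne τ
    have hw : W ≠ 0 := hWne
    simp only [Pi.pow_apply]
    field_simp
    ring
  -- explicit form of z₂
  have hz₂' : ∀ τ : ℝ, z₂ τ = (-E / W ^ 2 + τ * (τ - τ₀)) / R₁ τ := by
    intro τ
    rw [hz₂]
    have hr : R₁ τ ≠ 0 := hRne τ
    have hw : W ≠ 0 := hWne
    field_simp
  have hz₂fun : z₂ = fun τ => (-E / W ^ 2 + τ * (τ - τ₀)) / R₁ τ := funext hz₂'
  -- first derivative of z₂
  have hdz₂ : ∀ τ : ℝ, HasDerivAt z₂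
      ((E / W * (3 * (τ - τ₀) + τ₀) + W * (τ - τ₀) ^ 3) / R₁ τ ^ 3) τ := by
    intro τ
    rw [hz₂fun]
    have hnum : HasDerivAt (fun t : ℝ => -E / W ^ 2 + t * (t - τ₀))
        (1 * (τ - τ₀) + τ * 1) τ :=
      (((hasDerivAt_id τ).mul ((hasDerivAt_id τ).sub_const τ₀))).const_add (-E / W ^ 2)
    have key := hnum.div (hdR τ) (hRne τ)
    refine key.congr_deriv ?_
    have hr : R₁ τ ≠ 0 := hRne τ
    have hw : W ≠ 0 := hWne
    field_simp
    linear_combination (2 * τ - τ₀) * h2w τ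
  have hdz₂fun : deriv z₂ = fun τ =>
      (E / W * (3 * (τ - τ₀) + τ₀) + W * (τ - τ₀) ^ 3) / R₁ τ ^ 3 :=
    funext fun τ => (hdz₂ τ).deriv
  -- second derivative of z₂
  have hddz₂ : ∀ τ : ℝ, HasDerivAt (deriv z₂)
      (-3 * E * (-E / W ^ 2 + τ * (τ - τ₀)) / R₁ τ ^ 5) τ := by
    intro τ
    rw [hdz₂fun]
    have hnum : HasDerivAt (fun t : ℝ => E / W * (3 * (t - τ₀) + τ₀) + W * (t - τ₀) ^ 3)
        (E / W * 3 + W * (3 * (τ - τ₀) ^ 2)) τ := by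
      have h1 : HasDerivAt (fun t : ℝ => E / W * (3 * (t - τ₀) + τ₀)) (E / W * 3) τ := by
        simpa using ((((hasDerivAt_id τ).sub_const τ₀).const_mul 3).add_const τ₀).const_mul (E / W)
      have h3 : HasDerivAt (fun t : ℝ => W * (t - τ₀) ^ 3) (W * (3 * (τ - τ₀) ^ 2)) τ := by
        simpa using (((hasDerivAt_id τ).sub_const τ₀).pow 3).const_mul W
      exact h1.add h3
    have key := hnum.div ((hdR τ).pow 3) (pow_ne_zero 3 (hRne τ))
    refine key.congr_deriv ?_
    have hr : R₁ τ ≠ 0 := hRne τ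
    have hw : W ≠ 0 := hWne
    simp only [Pi.pow_apply, Nat.cast_ofNat]
    field_simp
    linear_combination (R₁ τ ^ 2 * (E + W ^ 2 * (τ - τ₀) ^ 2)) * h2w τ
  refine ⟨?_, ?_, ?_, ?_⟩
  · intro τ
    rw [(hddz₁ τ).deriv, hz₁' τ]
    have hr : R₁ τ ≠ 0 := hRne τ
    field_simp
    ring
  · intro τ
    rw [(hddz₂ τ).deriv, hz₂' τ]
    have hr : R₁ τ ≠ 0 := hRne τ
    have hw : W ≠ 0 := hWne
    field_simp
    ring
  · intro τ
    rw [(hdz₂ τ).deriv, (hdz₁ τ).deriv, hz₁' τ, hz₂' τ]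
    have hr : R₁ τ ≠ 0 := hRne τ
    have hw : W ≠ 0 := hWne
    field_simp
    linear_combination (-(W * R₁ τ ^ 2 + E + W ^ 2 * (τ - τ₀) ^ 2)) * h2w τ
  · intro c₁ c₂ hc
    have h0 := hc τ₀
    rw [hz₁' τ₀, hz₂' τ₀] at h0
    have hz₂0 : (-E / W ^ 2 + τ₀ * (τ₀ - τ₀)) / R₁ τ₀ ≠ 0 := by
      apply div_ne_zero _ (hRne τ₀)
      have hpos : 0 < E / W ^ 2 := by positivity
      simp only [sub_self, mul_zero, add_zero, neg_div, ne_eq, neg_eq_zero]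
      exact hpos.ne'
    have hc₂ : c₂ = 0 := by
      have h0' : c₂ * ((-E / W ^ 2 + τ₀ * (τ₀ - τ₀)) / R₁ τ₀) = 0 := by
        have : c₁ * (W * (τ₀ - τ₀) / R₁ τ₀) = 0 := by simp
        linarith [h0]
      exact (mul_eq_zero.1 h0').resolve_right hz₂0
    have h1 := hc (τ₀ + 1)
    rw [hz₁' (τ₀ + 1), hc₂, zero_mul, add_zero] at h1
    have hne : W * (τ₀ + 1 - τ₀) / R₁ (τ₀ + 1) ≠ 0 := by
      apply div_ne_zero _ (hRne (τ₀ + 1))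
      simpa using hW.ne'
    exact ⟨(mul_eq_zero.1 h1).resolve_right hne, hc₂⟩
end

section
/- The kernel K(τ,σ) = ((τ−σ)/(R₁(τ)R₁(σ)))·(E/W + W(σ−τ₀)(τ−τ₀)) satisfies, for fixed σ ≥ 0 and τ ≥ σ: ∂²K/∂τ² + 3E·K/R₁(τ)⁴ = 0, K(σ,σ) = 0, and ∂K/∂τ(τ,σ)|_{τ=σ} = 1. -/
theorem kernel_properties (E W τ₀ : ℝ) (hE : 0 < E) (hW : 0 < W)
    (R₁ : ℝ → ℝ) (hR₁ : R₁ = fun τ => Real.sqrt (E / W + W * (τ - τ₀) ^ 2))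
    (K : ℝ → ℝ → ℝ)
    (hK : K = fun τ σ => (τ - σ) * (E / W + W * (σ - τ₀) * (τ - τ₀)) / (R₁ τ * R₁ σ))
    (σ : ℝ) (hσ : 0 ≤ σ) :
    (∀ τ : ℝ, σ ≤ τ →
      deriv (deriv (fun t => K t σ)) τ + 3 * E * K τ σ / R₁ τ ^ 4 = 0) ∧
    K σ σ = 0 ∧ deriv (fun t => K t σ) σ = 1 := by
  subst hR₁ hK
  simp only []
  obtain ⟨a, haE, ha⟩ : ∃ a : ℝ, E = W * a ∧ 0 < a :=
    ⟨E / W, by field_simp, div_pos hE hW⟩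
  subst haE
  rw [show W * a / W = a from by field_simp]
  have hq : ∀ t : ℝ, (0:ℝ) < a + W * (t - τ₀) ^ 2 := fun t =>
    add_pos_of_pos_of_nonneg ha (by positivity)
  have hs : ∀ t : ℝ, 0 < Real.sqrt (a + W * (t - τ₀) ^ 2) := fun t =>
    Real.sqrt_pos.mpr (hq t)
  have hss : ∀ t : ℝ, Real.sqrt (a + W * (t - τ₀) ^ 2) ^ 2 = a + W * (t - τ₀) ^ 2 :=
    fun t => Real.sq_sqrt (hq t).le
  set c := Real.sqrt (a + W * (σ - τ₀) ^ 2) with hc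
  have hcpos : 0 < c := hs σ
  -- derivative of sqrt of q
  have hsq : ∀ t : ℝ, HasDerivAt (fun t => Real.sqrt (a + W * (t - τ₀) ^ 2))
      (W * (t - τ₀) / Real.sqrt (a + W * (t - τ₀) ^ 2)) t := by
    intro t
    have hq' : HasDerivAt (fun t : ℝ => a + W * (t - τ₀) ^ 2) (W * (2 * (t - τ₀))) t := by
      simpa using ((((hasDerivAt_id t).sub_const τ₀).pow 2).const_mul W).const_add a
    have h := hq'.sqrt (ne_of_gt (hq t))
    convert h using 1
    have h0 : Real.sqrt (a + W * (t - τ₀) ^ 2) ≠ 0 := (hs t).ne'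
    field_simp
  -- first derivative of the kernel in t
  have hD1 : ∀ t : ℝ, HasDerivAt
      (fun t => (t - σ) * (a + W * (σ - τ₀) * (t - τ₀)) /
        (Real.sqrt (a + W * (t - τ₀) ^ 2) * c))
      (((a + W * (σ - τ₀) * (t - τ₀) + (t - σ) * (W * (σ - τ₀))) * (a + W * (t - τ₀) ^ 2)
          - (t - σ) * (a + W * (σ - τ₀) * (t - τ₀)) * (W * (t - τ₀)))
        / (Real.sqrt (a + W * (t - τ₀) ^ 2) ^ 3 * c)) t := by
    intro t
    have h1 : HasDerivAt (fun t : ℝ => t - σ) 1 t := (hasDerivAt_id t).sub_const σ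
    have h2 : HasDerivAt (fun t : ℝ => a + W * (σ - τ₀) * (t - τ₀)) (W * (σ - τ₀)) t := by
      simpa using (((hasDerivAt_id t).sub_const τ₀).const_mul (W * (σ - τ₀))).const_add a
    have hu := h1.mul h2
    have hden := (hsq t).mul_const c
    have h := hu.div hden (mul_pos (hs t) hcpos).ne'
    convert h using 1
    case e'_4 => rfl
    case e'_5 => rfl
    case e'_8 => rfl
    simp only [Pi.mul_apply, Pi.sub_apply, Pi.pow_apply]
    have h0 : Real.sqrt (a + W * (t - τ₀) ^ 2) ≠ 0 := (hs t).ne'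
    set st := Real.sqrt (a + W * (t - τ₀) ^ 2) with hst
    rw [show a + W * (t - τ₀) ^ 2 = st ^ 2 from (hss t).symm]
    field_simp
  -- second derivative of the kernel in t
  have hD2 : ∀ t : ℝ, HasDerivAt
      (fun t =>
        ((a + W * (σ - τ₀) * (t - τ₀) + (t - σ) * (W * (σ - τ₀))) * (a + W * (t - τ₀) ^ 2)
            - (t - σ) * (a + W * (σ - τ₀) * (t - τ₀)) * (W * (t - τ₀)))
          / (Real.sqrt (a + W * (t - τ₀) ^ 2) ^ 3 * c))
      ((((2 * (W * (σ - τ₀))) * (a + W * (t - τ₀) ^ 2)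
            + (a + W * (σ - τ₀) * (t - τ₀) + (t - σ) * (W * (σ - τ₀))) * (W * (2 * (t - τ₀)))
            - ((a + W * (σ - τ₀) * (t - τ₀) + (t - σ) * (W * (σ - τ₀))) * (W * (t - τ₀))
              + (t - σ) * (a + W * (σ - τ₀) * (t - τ₀)) * W)) * (a + W * (t - τ₀) ^ 2)
          - 3 * ((a + W * (σ - τ₀) * (t - τ₀) + (t - σ) * (W * (σ - τ₀)))
              * (a + W * (t - τ₀) ^ 2)
            - (t - σ) * (a + W * (σ - τ₀) * (t - τ₀)) * (W * (t - τ₀))) * (W * (t - τ₀)))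
        / (Real.sqrt (a + W * (t - τ₀) ^ 2) ^ 5 * c)) t := by
    intro t
    have h1 : HasDerivAt (fun t : ℝ => t - σ) 1 t := (hasDerivAt_id t).sub_const σ
    have h2 : HasDerivAt (fun t : ℝ => a + W * (σ - τ₀) * (t - τ₀)) (W * (σ - τ₀)) t := by
      simpa using (((hasDerivAt_id t).sub_const τ₀).const_mul (W * (σ - τ₀))).const_add a
    have h3 : HasDerivAt (fun t : ℝ => a + W * (t - τ₀) ^ 2) (W * (2 * (t - τ₀))) t := by
      simpa using ((((hasDerivAt_id t).sub_const τ₀).pow 2).const_mul W).const_add a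
    have h4 : HasDerivAt (fun t : ℝ => W * (t - τ₀)) W t := by
      simpa using ((hasDerivAt_id t).sub_const τ₀).const_mul W
    have hup : HasDerivAt
        (fun t : ℝ => a + W * (σ - τ₀) * (t - τ₀) + (t - σ) * (W * (σ - τ₀)))
        (W * (σ - τ₀) + 1 * (W * (σ - τ₀))) t := h2.add (h1.mul_const (W * (σ - τ₀)))
    have hN := (hup.mul h3).sub ((h1.mul h2).mul h4)
    have hden := ((hsq t).pow 3).mul_const c
    have h := hN.div hden (mul_pos (pow_pos (hs t) 3) hcpos).ne'
    convert h using 1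
    case e'_4 => rfl
    case e'_5 => rfl
    case e'_8 => rfl
    simp only [Pi.mul_apply, Pi.sub_apply, Pi.pow_apply]
    have h0 : Real.sqrt (a + W * (t - τ₀) ^ 2) ≠ 0 := (hs t).ne'
    set st := Real.sqrt (a + W * (t - τ₀) ^ 2) with hst
    rw [show a + W * (t - τ₀) ^ 2 = st ^ 2 from (hss t).symm]
    field_simp
    ring
  have hg1 : deriv (fun t => (t - σ) * (a + W * (σ - τ₀) * (t - τ₀)) /
        (Real.sqrt (a + W * (t - τ₀) ^ 2) * c))
      = fun t =>
        ((a + W * (σ - τ₀) * (t - τ₀) + (t - σ) * (W * (σ - τ₀))) * (a + W * (t - τ₀) ^ 2)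
            - (t - σ) * (a + W * (σ - τ₀) * (t - τ₀)) * (W * (t - τ₀)))
          / (Real.sqrt (a + W * (t - τ₀) ^ 2) ^ 3 * c) :=
    funext fun t => (hD1 t).deriv
  refine ⟨fun τ hτ => ?_, by simp, ?_⟩
  · rw [hg1, (hD2 τ).deriv]
    have h0 : Real.sqrt (a + W * (τ - τ₀) ^ 2) ≠ 0 := (hs τ).ne'
    have hc0 : c ≠ 0 := hcpos.ne'
    have hq0 : a + W * (τ - τ₀) ^ 2 ≠ 0 := (hq τ).ne'
    set st := Real.sqrt (a + W * (τ - τ₀) ^ 2) with hst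
    rw [show st ^ 5 = st * (a + W * (τ - τ₀) ^ 2) ^ 2 from by rw [← hss τ]; ring,
      show st ^ 4 = (a + W * (τ - τ₀) ^ 2) ^ 2 from by rw [← hss τ]; ring]
    field_simp
    ring
  · rw [(hD1 σ).deriv]
    rw [← hc]
    have hc0 : c ≠ 0 := hcpos.ne'
    have hc2 : c ^ 2 = a + W * (σ - τ₀) ^ 2 := by rw [hc]; exact hss σ
    rw [div_eq_one_iff_eq (by positivity)]
    linear_combination (-(c ^ 2 + (a + W * (σ - τ₀) ^ 2))) * hc2
end

section
/- There is a constant δ (independent of W and τ₀) such that for all τ ∈ [0,1], the quantity I(τ) = (1/R₁(τ)) ∫₀^τ K(τ,σ)/R₁(σ)³ dσ satisfies |I(τ)| ≤ δ, provided τ₀ ≤ √E/W; in fact one may take δ depending only on E. -/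
theorem I_bounded (E : ℝ) (hE : 0 < E) :
    ∃ δ : ℝ, ∀ W τ₀ : ℝ, 0 < W → τ₀ ∈ Set.Icc 0 (Real.sqrt E / W) →
      ∀ τ ∈ Set.Icc (0 : ℝ) 1,
        |(1 / Real.sqrt (E / W + W * (τ - τ₀) ^ 2)) *
          ∫ σ in (0 : ℝ)..τ,
            ((τ - σ) * (E / W + W * (σ - τ₀) * (τ - τ₀)) /
              (Real.sqrt (E / W + W * (τ - τ₀) ^ 2) *
                Real.sqrt (E / W + W * (σ - τ₀) ^ 2))) /
            Real.sqrt (E / W + W * (σ - τ₀) ^ 2) ^ 3| ≤ δ := by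
  refine ⟨1 / E, fun W τ₀ hW hτ₀ τ hτ => ?_⟩
  set a2 := E / W with ha2
  have ha2pos : 0 < a2 := div_pos hE hW
  have ha2W : W * a2 = E := by rw [ha2]; field_simp
  clear_value a2
  clear ha2
  have hDτ : 0 < a2 + W * (τ - τ₀) ^ 2 := by positivity
  have hDτ₀ : 0 < a2 + W * τ₀ ^ 2 := by positivity
  set Rτ := Real.sqrt (a2 + W * (τ - τ₀) ^ 2) with hRτdef
  have hRτ : 0 < Rτ := Real.sqrt_pos.mpr hDτ
  have hRτsq : Rτ ^ 2 = a2 + W * (τ - τ₀) ^ 2 := Real.sq_sqrt hDτ.le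
  set f : ℝ → ℝ := fun σ =>
    (τ - σ) * (a2 + W * (σ - τ₀) * (τ - τ₀)) / (a2 + W * (σ - τ₀) ^ 2) ^ 2 with hf
  set G : ℝ → ℝ := fun σ =>
    (2 * W * (τ - τ₀) * (σ - τ₀) - W * (τ - τ₀) ^ 2 + a2) /
      (2 * W * (a2 + W * (σ - τ₀) ^ 2)) with hG
  have key : ∀ σ : ℝ, HasDerivAt G (f σ) σ := by
    intro σ
    have hs : 0 < a2 + W * (σ - τ₀) ^ 2 := by positivity
    have h1 : HasDerivAt (fun x : ℝ => x - τ₀) 1 σ := (hasDerivAt_id σ).sub_const τ₀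
    have hN : HasDerivAt (fun x : ℝ => 2 * W * (τ - τ₀) * (x - τ₀) - W * (τ - τ₀) ^ 2 + a2)
        (2 * W * (τ - τ₀) * 1) σ :=
      ((h1.const_mul (2 * W * (τ - τ₀))).sub_const _).add_const _
    have h2 : HasDerivAt (fun x : ℝ => (x - τ₀) ^ 2) (2 * (σ - τ₀) ^ 1 * 1) σ := h1.pow 2
    have hD : HasDerivAt (fun x : ℝ => 2 * W * (a2 + W * (x - τ₀) ^ 2))
        (2 * W * (W * (2 * (σ - τ₀) ^ 1 * 1))) σ :=
      (((h2.const_mul W).const_add a2).const_mul (2 * W))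
    have hDne : (2 * W * (a2 + W * (σ - τ₀) ^ 2)) ≠ 0 := by positivity
    have hdiv := hN.div hD hDne
    refine hdiv.congr_deriv ?_
    rw [hf]
    field_simp
    ring
  have hcont : Continuous f := by
    rw [hf]
    apply Continuous.div
    · continuity
    · continuity
    · intro x; positivity
  have hint : ∫ σ in (0:ℝ)..τ, f σ = G τ - G 0 :=
    intervalIntegral.integral_eq_sub_of_hasDerivAt (fun x _ => key x) (hcont.intervalIntegrable 0 τ)
  have hcongr : ∀ σ : ℝ,
      ((τ - σ) * (a2 + W * (σ - τ₀) * (τ - τ₀)) /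
        (Rτ * Real.sqrt (a2 + W * (σ - τ₀) ^ 2))) /
        Real.sqrt (a2 + W * (σ - τ₀) ^ 2) ^ 3 = (1 / Rτ) * f σ := by
    intro σ
    have hs : 0 < a2 + W * (σ - τ₀) ^ 2 := by positivity
    have h4 : Real.sqrt (a2 + W * (σ - τ₀) ^ 2) * Real.sqrt (a2 + W * (σ - τ₀) ^ 2) ^ 3 =
        (a2 + W * (σ - τ₀) ^ 2) ^ 2 := by
      rw [show Real.sqrt (a2 + W * (σ - τ₀) ^ 2) * Real.sqrt (a2 + W * (σ - τ₀) ^ 2) ^ 3 =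
          (Real.sqrt (a2 + W * (σ - τ₀) ^ 2) ^ 2) ^ 2 by ring, Real.sq_sqrt hs.le]
    simp only [hf]
    rw [div_div, mul_assoc Rτ, h4, mul_comm Rτ ((a2 + W * (σ - τ₀) ^ 2) ^ 2), ← div_div,
      mul_comm (1 / Rτ), ← div_eq_mul_one_div]
  have hIeq : (∫ σ in (0:ℝ)..τ,
      ((τ - σ) * (a2 + W * (σ - τ₀) * (τ - τ₀)) /
        (Rτ * Real.sqrt (a2 + W * (σ - τ₀) ^ 2))) /
        Real.sqrt (a2 + W * (σ - τ₀) ^ 2) ^ 3) = (1 / Rτ) * (G τ - G 0) := by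
    rw [intervalIntegral.integral_congr (g := fun σ => (1 / Rτ) * f σ) (fun σ _ => hcongr σ),
      intervalIntegral.integral_const_mul, hint]
  rw [hIeq]
  have hval : (1 / Rτ) * ((1 / Rτ) * (G τ - G 0)) =
      τ ^ 2 / (2 * ((a2 + W * (τ - τ₀) ^ 2) * (a2 + W * τ₀ ^ 2))) := by
    have h5 : (1 / Rτ) * ((1 / Rτ) * (G τ - G 0)) = (G τ - G 0) / (a2 + W * (τ - τ₀) ^ 2) := by
      rw [one_div, ← mul_assoc, ← mul_inv, ← pow_two, hRτsq, inv_mul_eq_div]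
    rw [h5]
    simp only [hG]
    have h01 : (a2 + W * (τ - τ₀) ^ 2) ≠ 0 := hDτ.ne'
    have h02 : (a2 + W * (0 - τ₀) ^ 2) ≠ 0 := by positivity
    have h03 : (2 : ℝ) * W ≠ 0 := by positivity
    field_simp
    ring
  rw [hval, abs_of_nonneg (by positivity), div_le_div_iff₀ (by positivity) hE]
  have hid : 2 * ((a2 + W * (τ - τ₀) ^ 2) * (a2 + W * τ₀ ^ 2)) - τ ^ 2 * E =
      2 * a2 ^ 2 + W * a2 * (τ - 2 * τ₀) ^ 2 + 2 * (W * ((τ - τ₀) * τ₀)) ^ 2 := by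
    linear_combination τ ^ 2 * ha2W
  have hpos : 0 ≤ 2 * a2 ^ 2 + W * a2 * (τ - 2 * τ₀) ^ 2 + 2 * (W * ((τ - τ₀) * τ₀)) ^ 2 := by
    positivity
  linarith
end

section
/- Along a positive solution R of R̈ + 2αṘ + R = E(1−ε)²/R³, if Ṙ(τ₁) − ξ₁R(τ₁) ≥ 0, then for all τ ≥ τ₁ one has Ṙ(τ) − ξ₁R(τ) ≥ 0; indeed the quantity g = Ṙ − ξ₁R satisfies ġ = ξ₂g + E(1−ε)²/R³ and hence g(τ) = e^{ξ₂(τ−τ₁)}g(τ₁) + ∫_{τ₁}^τ e^{ξ₂(τ−σ)} E(1−ε)²/R(σ)³ dσ ≥ 0. -/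
theorem dissipation_inequality (α E ε τ₁ : ℝ) (hα : 1 < α) (hE : 0 < E)
    (hε : ε ∈ Set.Ico (0 : ℝ) 1)
    (Δ ξ₁ ξ₂ : ℝ) (hΔ : Δ = α ^ 2 - 1)
    (hξ₁ : ξ₁ = -α + Real.sqrt Δ) (hξ₂ : ξ₂ = -α - Real.sqrt Δ)
    (R R' : ℝ → ℝ)
    (hpos : ∀ τ : ℝ, τ₁ ≤ τ → 0 < R τ)
    (hR : ∀ τ : ℝ, τ₁ ≤ τ → HasDerivAt R (R' τ) τ)
    (hR' : ∀ τ : ℝ, τ₁ ≤ τ →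
      HasDerivAt R' (-2 * α * R' τ - R τ + E * (1 - ε) ^ 2 / R τ ^ 3) τ)
    (hinit : 0 ≤ R' τ₁ - ξ₁ * R τ₁) :
    ∀ τ : ℝ, τ₁ ≤ τ →
      (R' τ - ξ₁ * R τ =
        Real.exp (ξ₂ * (τ - τ₁)) * (R' τ₁ - ξ₁ * R τ₁) +
          ∫ σ in τ₁..τ, Real.exp (ξ₂ * (τ - σ)) * (E * (1 - ε) ^ 2 / R σ ^ 3)) ∧
      0 ≤ R' τ - ξ₁ * R τ := by
  obtain ⟨hε0, hε1⟩ := hε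
  have hc : 0 ≤ E * (1 - ε) ^ 2 := by positivity
  have hΔ0 : 0 ≤ Δ := by nlinarith
  have hsq : Real.sqrt Δ ^ 2 = Δ := Real.sq_sqrt hΔ0
  have hξsum : ξ₁ + ξ₂ = -2 * α := by rw [hξ₁, hξ₂]; ring
  have hξprod : ξ₁ * ξ₂ = 1 := by rw [hξ₁, hξ₂]; nlinarith [hsq]
  -- derivative of g = R' - ξ₁ R
  have hg : ∀ t, τ₁ ≤ t → HasDerivAt (fun s => R' s - ξ₁ * R s)
      (ξ₂ * (R' t - ξ₁ * R t) + E * (1 - ε) ^ 2 / R t ^ 3) t := by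
    intro t ht
    have h1 := (hR' t ht).sub ((hR t ht).const_mul ξ₁)
    refine h1.congr_deriv ?_
    linear_combination -(R' t) * hξsum + (R t) * hξprod
  -- derivative of h = exp(-ξ₂ t) * g
  have hh : ∀ t, τ₁ ≤ t → HasDerivAt
      (fun s => Real.exp (-ξ₂ * s) * (R' s - ξ₁ * R s))
      (Real.exp (-ξ₂ * t) * (E * (1 - ε) ^ 2 / R t ^ 3)) t := by
    intro t ht
    have he : HasDerivAt (fun s => Real.exp (-ξ₂ * s)) (Real.exp (-ξ₂ * t) * (-ξ₂)) t := by
      simpa using ((hasDerivAt_id t).const_mul (-ξ₂)).exp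
    have := he.mul (hg t ht)
    refine this.congr_deriv ?_
    ring
  intro τ hτ
  have hIcc : Set.uIcc τ₁ τ = Set.Icc τ₁ τ := Set.uIcc_of_le hτ
  have hRcont : ContinuousOn R (Set.uIcc τ₁ τ) := by
    rw [hIcc]
    exact fun t ht => (hR t ht.1).continuousAt.continuousWithinAt
  have hFcont : ContinuousOn (fun σ => Real.exp (-ξ₂ * σ) * (E * (1 - ε) ^ 2 / R σ ^ 3))
      (Set.uIcc τ₁ τ) := by
    apply ContinuousOn.mul
    · exact (Real.continuous_exp.comp (continuous_const.mul continuous_id)).continuousOn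
    · apply ContinuousOn.div continuousOn_const (hRcont.pow 3)
      intro t ht
      rw [hIcc] at ht
      exact pow_ne_zero 3 (hpos t ht.1).ne'
  have hInt : IntervalIntegrable (fun σ => Real.exp (-ξ₂ * σ) * (E * (1 - ε) ^ 2 / R σ ^ 3))
      MeasureTheory.volume τ₁ τ := hFcont.intervalIntegrable
  have key : (∫ σ in τ₁..τ, Real.exp (-ξ₂ * σ) * (E * (1 - ε) ^ 2 / R σ ^ 3))
      = Real.exp (-ξ₂ * τ) * (R' τ - ξ₁ * R τ)
        - Real.exp (-ξ₂ * τ₁) * (R' τ₁ - ξ₁ * R τ₁) := by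
    apply intervalIntegral.integral_eq_sub_of_hasDerivAt
    · intro t ht
      rw [hIcc] at ht
      exact hh t ht.1
    · exact hInt
  have hint : (∫ σ in τ₁..τ, Real.exp (ξ₂ * (τ - σ)) * (E * (1 - ε) ^ 2 / R σ ^ 3))
      = Real.exp (ξ₂ * τ) * ∫ σ in τ₁..τ, Real.exp (-ξ₂ * σ) * (E * (1 - ε) ^ 2 / R σ ^ 3) := by
    rw [← intervalIntegral.integral_const_mul]
    refine intervalIntegral.integral_congr fun σ _ => ?_
    rw [← mul_assoc, ← Real.exp_add]
    ring_nf
  have eA : Real.exp (ξ₂ * τ) * Real.exp (-ξ₂ * τ) = 1 := by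
    rw [← Real.exp_add]; ring_nf; exact Real.exp_zero
  have eB : Real.exp (ξ₂ * τ) * Real.exp (-ξ₂ * τ₁) = Real.exp (ξ₂ * (τ - τ₁)) := by
    rw [← Real.exp_add]; ring_nf
  have heq : R' τ - ξ₁ * R τ =
      Real.exp (ξ₂ * (τ - τ₁)) * (R' τ₁ - ξ₁ * R τ₁) +
        ∫ σ in τ₁..τ, Real.exp (ξ₂ * (τ - σ)) * (E * (1 - ε) ^ 2 / R σ ^ 3) := by
    rw [hint]
    linear_combination (-Real.exp (ξ₂ * τ)) * key - (R' τ - ξ₁ * R τ) * eA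
      + (R' τ₁ - ξ₁ * R τ₁) * eB
  refine ⟨heq, ?_⟩
  rw [heq]
  have h1 : 0 ≤ Real.exp (ξ₂ * (τ - τ₁)) * (R' τ₁ - ξ₁ * R τ₁) :=
    mul_nonneg (Real.exp_pos _).le hinit
  have h2 : 0 ≤ ∫ σ in τ₁..τ, Real.exp (ξ₂ * (τ - σ)) * (E * (1 - ε) ^ 2 / R σ ^ 3) := by
    apply intervalIntegral.integral_nonneg hτ
    intro σ hσ
    have := hpos σ hσ.1
    positivity
  linarith
end
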